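/- The Lie algebras g₁ and g₂ have isomorphic associated Carnot graded Lie algebras; more precisely, the associated graded Lie algebra of g₂ (with respect to its lower central series) is isomorphic to g₁. -/
import Mathlib

/-- The bracket of `g₁`: `[a₁,a₂] = -b`, `[a₁,b] = -c`, `[a₁,c] = -d`. -/
def bracket1 (u v : Fin 5 → ℝ) : Fin 5 → ℝ :=
  ![0, 0,
    -(u 0 * v 1 - u 1 * v 0),
    -(u 0 * v 2 - u 2 * v 0),
    -(u 0 * v 3 - u 3 * v 0)]

/-- The bracket of `g₂`: `[a₁,a₂] = -b`, `[a₁,b] = -c`, `[a₁,c] = -d`, `[a₂,b] = -d`. -/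
def bracket2 (u v : Fin 5 → ℝ) : Fin 5 → ℝ :=
  ![0, 0,
    -(u 0 * v 1 - u 1 * v 0),
    -(u 0 * v 2 - u 2 * v 0),
    -(u 0 * v 3 - u 3 * v 0) - (u 1 * v 2 - u 2 * v 1)]

/-- The lower central series of a bracket: `g⁽⁰⁾ = g`, `g⁽ⁱ⁺¹⁾ = [g⁽ⁱ⁾, g]` (as a span). -/
def lcs {V : Type*} [AddCommGroup V] [Module ℝ V] (B : V → V → V) : ℕ → Submodule ℝ V
  | 0 => ⊤
  | i + 1 => Submodule.span ℝ {z | ∃ u ∈ lcs B i, ∃ v, z = B u v}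

def S1 : Submodule ℝ (Fin 5 → ℝ) where
  carrier := {x | x 0 = 0 ∧ x 1 = 0}
  add_mem' := fun ha hb => ⟨by simp [ha.1, hb.1], by simp [ha.2, hb.2]⟩
  zero_mem' := ⟨rfl, rfl⟩
  smul_mem' := fun c a ha => ⟨by simp [ha.1], by simp [ha.2]⟩

def S2 : Submodule ℝ (Fin 5 → ℝ) where
  carrier := {x | x 0 = 0 ∧ x 1 = 0 ∧ x 2 = 0}
  add_mem' := fun ha hb => ⟨by simp [ha.1, hb.1], by simp [ha.2.1, hb.2.1], by simp [ha.2.2, hb.2.2]⟩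
  zero_mem' := ⟨rfl, rfl, rfl⟩
  smul_mem' := fun c a ha => ⟨by simp [ha.1], by simp [ha.2.1], by simp [ha.2.2]⟩

def S3 : Submodule ℝ (Fin 5 → ℝ) where
  carrier := {x | x 0 = 0 ∧ x 1 = 0 ∧ x 2 = 0 ∧ x 3 = 0}
  add_mem' := fun ha hb => ⟨by simp [ha.1, hb.1], by simp [ha.2.1, hb.2.1],
    by simp [ha.2.2.1, hb.2.2.1], by simp [ha.2.2.2, hb.2.2.2]⟩
  zero_mem' := ⟨rfl, rfl, rfl, rfl⟩
  smul_mem' := fun c a ha => ⟨by simp [ha.1], by simp [ha.2.1], by simp [ha.2.2.1],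
    by simp [ha.2.2.2]⟩

lemma memS1 {x : Fin 5 → ℝ} : x ∈ S1 ↔ x 0 = 0 ∧ x 1 = 0 := Iff.rfl
lemma memS2 {x : Fin 5 → ℝ} : x ∈ S2 ↔ x 0 = 0 ∧ x 1 = 0 ∧ x 2 = 0 := Iff.rfl
lemma memS3 {x : Fin 5 → ℝ} : x ∈ S3 ↔ x 0 = 0 ∧ x 1 = 0 ∧ x 2 = 0 ∧ x 3 = 0 := Iff.rfl

-- lcs bracket2 (i+1) ≤ S1
lemma lcs2_le_S1 (i : ℕ) : lcs bracket2 (i + 1) ≤ S1 := by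
  rw [lcs]
  rw [Submodule.span_le]
  rintro z ⟨u, hu, v, rfl⟩
  exact ⟨by simp [bracket2], by simp [bracket2]⟩

lemma lcs1_le_S1 (i : ℕ) : lcs bracket1 (i + 1) ≤ S1 := by
  rw [lcs, Submodule.span_le]
  rintro z ⟨u, hu, v, rfl⟩
  exact ⟨by simp [bracket1], by simp [bracket1]⟩

lemma lcs2_le_S2 (i : ℕ) : lcs bracket2 (i + 2) ≤ S2 := by
  rw [lcs, Submodule.span_le]
  rintro z ⟨u, hu, v, rfl⟩
  obtain ⟨h0, h1⟩ := lcs2_le_S1 i hu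
  exact ⟨by simp [bracket2], by simp [bracket2], by simp [bracket2, h0, h1]⟩

lemma lcs1_le_S2 (i : ℕ) : lcs bracket1 (i + 2) ≤ S2 := by
  rw [lcs, Submodule.span_le]
  rintro z ⟨u, hu, v, rfl⟩
  obtain ⟨h0, h1⟩ := lcs1_le_S1 i hu
  exact ⟨by simp [bracket1], by simp [bracket1], by simp [bracket1, h0, h1]⟩

lemma lcs2_le_S3 (i : ℕ) : lcs bracket2 (i + 3) ≤ S3 := by
  rw [lcs, Submodule.span_le]
  rintro z ⟨u, hu, v, rfl⟩
  obtain ⟨h0, h1, h2⟩ := lcs2_le_S2 i hu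
  exact ⟨by simp [bracket2], by simp [bracket2], by simp [bracket2, h0, h1],
    by simp [bracket2, h0, h2]⟩

lemma lcs1_le_S3 (i : ℕ) : lcs bracket1 (i + 3) ≤ S3 := by
  rw [lcs, Submodule.span_le]
  rintro z ⟨u, hu, v, rfl⟩
  obtain ⟨h0, h1, h2⟩ := lcs1_le_S2 i hu
  exact ⟨by simp [bracket1], by simp [bracket1], by simp [bracket1, h0, h1],
    by simp [bracket1, h0, h2]⟩

lemma lcs2_one : lcs bracket2 1 = S1 := by
  refine le_antisymm (lcs2_le_S1 0) ?_
  intro x hx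
  obtain ⟨h0, h1⟩ := hx
  rw [lcs]
  apply Submodule.subset_span
  refine ⟨![1,0,0,0,0], by rw [lcs]; trivial, ![0, -x 2, -x 3, -x 4, 0], ?_⟩
  funext k; fin_cases k <;> simp [bracket2, h0, h1]

lemma lcs1_one : lcs bracket1 1 = S1 := by
  refine le_antisymm (lcs1_le_S1 0) ?_
  intro x hx
  obtain ⟨h0, h1⟩ := hx
  rw [lcs]
  apply Submodule.subset_span
  refine ⟨![1,0,0,0,0], by rw [lcs]; trivial, ![0, -x 2, -x 3, -x 4, 0], ?_⟩
  funext k; fin_cases k <;> simp [bracket1, h0, h1]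

lemma lcs2_two : lcs bracket2 2 = S2 := by
  refine le_antisymm (lcs2_le_S2 0) ?_
  intro x hx
  obtain ⟨h0, h1, h2⟩ := hx
  rw [lcs]
  apply Submodule.subset_span
  refine ⟨![0,0,1,0,0], by rw [lcs2_one]; exact ⟨rfl, rfl⟩, ![x 3, x 4, 0, 0, 0], ?_⟩
  funext k; fin_cases k <;> simp [bracket2, h0, h1, h2]

lemma lcs1_two : lcs bracket1 2 = S2 := by
  refine le_antisymm (lcs1_le_S2 0) ?_
  intro x hx
  obtain ⟨h0, h1, h2⟩ := hx
  have ha : (![0,0,0, x 3, 0] : Fin 5 → ℝ) ∈ lcs bracket1 2 := by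
    rw [lcs]
    apply Submodule.subset_span
    refine ⟨![0,0,1,0,0], by rw [lcs1_one]; exact ⟨rfl, rfl⟩, ![x 3, 0, 0, 0, 0], ?_⟩
    funext k; fin_cases k <;> simp [bracket1]
  have hb : (![0,0,0, 0, x 4] : Fin 5 → ℝ) ∈ lcs bracket1 2 := by
    rw [lcs]
    apply Submodule.subset_span
    refine ⟨![0,0,0,1,0], by rw [lcs1_one]; exact ⟨rfl, rfl⟩, ![x 4, 0, 0, 0, 0], ?_⟩
    funext k; fin_cases k <;> simp [bracket1]
  have hx : x = ![0,0,0, x 3, 0] + ![0,0,0, 0, x 4] := by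
    funext k; fin_cases k <;> simp [h0, h1, h2]
  rw [hx]; exact add_mem ha hb

lemma lcs2_three : lcs bracket2 3 = S3 := by
  refine le_antisymm (lcs2_le_S3 0) ?_
  intro x hx
  obtain ⟨h0, h1, h2, h3⟩ := hx
  rw [lcs]
  apply Submodule.subset_span
  refine ⟨![0,0,0,1,0], by rw [lcs2_two]; exact ⟨rfl, rfl, rfl⟩, ![x 4, 0, 0, 0, 0], ?_⟩
  funext k; fin_cases k <;> simp [bracket2, h0, h1, h2, h3]

lemma lcs1_three : lcs bracket1 3 = S3 := by
  refine le_antisymm (lcs1_le_S3 0) ?_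
  intro x hx
  obtain ⟨h0, h1, h2, h3⟩ := hx
  rw [lcs]
  apply Submodule.subset_span
  refine ⟨![0,0,0,1,0], by rw [lcs1_two]; exact ⟨rfl, rfl, rfl⟩, ![x 4, 0, 0, 0, 0], ?_⟩
  funext k; fin_cases k <;> simp [bracket1, h0, h1, h2, h3]

lemma lcs2_bot (n : ℕ) : lcs bracket2 (n + 4) = ⊥ := by
  induction n with
  | zero =>
    rw [lcs, ← le_bot_iff, Submodule.span_le]
    rintro z ⟨u, hu, v, rfl⟩
    obtain ⟨h0, h1, h2, h3⟩ := lcs2_le_S3 0 hu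
    simp only [Set.mem_setOf_eq, SetLike.mem_coe, Submodule.mem_bot]
    funext k; fin_cases k <;> simp [bracket2, h0, h1, h2, h3]
  | succ n ih =>
    rw [show n + 1 + 4 = (n + 4) + 1 from by ring, lcs, ← le_bot_iff, Submodule.span_le]
    rintro z ⟨u, hu, v, rfl⟩
    rw [ih, Submodule.mem_bot] at hu
    subst hu
    simp only [SetLike.mem_coe, Submodule.mem_bot]
    funext k; fin_cases k <;> simp [bracket2]

lemma lcs1_bot (n : ℕ) : lcs bracket1 (n + 4) = ⊥ := by
  induction n with
  | zero =>
    rw [lcs, ← le_bot_iff, Submodule.span_le]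
    rintro z ⟨u, hu, v, rfl⟩
    obtain ⟨h0, h1, h2, h3⟩ := lcs1_le_S3 0 hu
    simp only [Set.mem_setOf_eq, SetLike.mem_coe, Submodule.mem_bot]
    funext k; fin_cases k <;> simp [bracket1, h0, h1, h2, h3]
  | succ n ih =>
    rw [show n + 1 + 4 = (n + 4) + 1 from by ring, lcs, ← le_bot_iff, Submodule.span_le]
    rintro z ⟨u, hu, v, rfl⟩
    rw [ih, Submodule.mem_bot] at hu
    subst hu
    simp only [SetLike.mem_coe, Submodule.mem_bot]
    funext k; fin_cases k <;> simp [bracket1]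

lemma lcs_eq : ∀ i, lcs bracket2 i = lcs bracket1 i
  | 0 => rfl
  | 1 => by rw [lcs2_one, lcs1_one]
  | 2 => by rw [lcs2_two, lcs1_two]
  | 3 => by rw [lcs2_three, lcs1_three]
  | (n + 4) => by rw [lcs2_bot, lcs1_bot]

theorem stmt3 :
    ∃ e : (Fin 5 → ℝ) ≃ₗ[ℝ] (Fin 5 → ℝ),
      (∀ i : ℕ, Submodule.map (e : (Fin 5 → ℝ) →ₗ[ℝ] (Fin 5 → ℝ)) (lcs bracket2 i)
          = lcs bracket1 i) ∧
      ∀ i j : ℕ, ∀ u ∈ lcs bracket2 i, ∀ v ∈ lcs bracket2 j,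
        e (bracket2 u v) - bracket1 (e u) (e v) ∈ lcs bracket1 (i + j + 2) := by
  refine ⟨LinearEquiv.refl ℝ _, ?_, ?_⟩
  · intro i
    simp only [LinearEquiv.refl_toLinearMap, Submodule.map_id]
    exact lcs_eq i
  · intro i j u hu v hv
    simp only [LinearEquiv.refl_apply]
    have hd : bracket2 u v - bracket1 u v
        = ![0, 0, 0, 0, -(u 1 * v 2 - u 2 * v 1)] := by
      funext k; fin_cases k <;> simp [bracket1, bracket2]
    rw [hd]
    match i, j with
    | 0, 0 =>
      rw [show (0:ℕ) + 0 + 2 = 2 from rfl, lcs1_two]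
      refine ⟨?_, ?_, ?_⟩ <;> simp
    | 0, 1 =>
      rw [show (0:ℕ) + 1 + 2 = 3 from rfl, lcs1_three]
      refine ⟨?_, ?_, ?_, ?_⟩ <;> simp
    | 1, 0 =>
      rw [show (1:ℕ) + 0 + 2 = 3 from rfl, lcs1_three]
      refine ⟨?_, ?_, ?_, ?_⟩ <;> simp
    | 1, j + 1 =>
      have hu1 : u 1 = 0 := ((lcs2_one ▸ hu : u ∈ S1)).2
      have hv1 : v 1 = 0 := (lcs2_le_S1 j hv).2
      have h0 : (![0, 0, 0, 0, -(u 1 * v 2 - u 2 * v 1)] : Fin 5 → ℝ) = 0 := by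
        funext k; fin_cases k <;> simp [hu1, hv1]
      rw [h0]; exact zero_mem _
    | i + 2, j =>
      obtain ⟨-, hu1, hu2⟩ := lcs2_le_S2 i hu
      have h0 : (![0, 0, 0, 0, -(u 1 * v 2 - u 2 * v 1)] : Fin 5 → ℝ) = 0 := by
        funext k; fin_cases k <;> simp [hu1, hu2]
      rw [h0]; exact zero_mem _
    | 0, j + 2 =>
      obtain ⟨-, hv1, hv2⟩ := lcs2_le_S2 j hv
      have h0 : (![0, 0, 0, 0, -(u 1 * v 2 - u 2 * v 1)] : Fin 5 → ℝ) = 0 := by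
        funext k; fin_cases k <;> simp [hv1, hv2]
      rw [h0]; exact zero_mem _
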